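/- For every finite connected preorder T, the coproduct δ satisfies the left non-coassociative permutative (NAP) identity (id ⊗ δ)∘δ (T) = τ¹²∘(id ⊗ δ)∘δ (T), where τ¹² swaps the first two tensor factors; explicitly, the element (1/|min(T)|) Σ_{Y ◎ T} (1/|min(T|_{X\Y})|) Σ_{Z ◎ T|_{X\Y}} T|_Y ⊗ T|_Z ⊗ T|_{X\(Y∪Z)} is invariant under exchanging the first two tensor factors. -/

import Mathlib

open scoped Classical

/-- A finite preorder (quasi-order, i.e. finite topological space) on a subset
(`carrier`) of an ambient type `α`. -/
structure FinPre (α : Type*) where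
  carrier : Finset α
  le : α → α → Prop
  mem_of_le : ∀ ⦃x y⦄, le x y → x ∈ carrier ∧ y ∈ carrier
  le_refl : ∀ x ∈ carrier, le x x
  le_trans : ∀ ⦃x y z⦄, le x y → le y z → le x z

namespace FinPre

variable {α : Type*} [DecidableEq α]

/-- The strict relation `x < y`, i.e. `x ≤ y` and not `y ≤ x`. -/
def lt (T : FinPre α) (x y : α) : Prop := T.le x y ∧ ¬ T.le y x

/-- The equivalence `x ~ y` iff `x ≤ y` and `y ≤ x`. -/
def equiv (T : FinPre α) (x y : α) : Prop := T.le x y ∧ T.le y x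

/-- The bag (equivalence class) of a vertex `v`. -/
noncomputable def bag (T : FinPre α) (v : α) : Finset α :=
  T.carrier.filter (fun x => T.equiv x v)

/-- `min(T)`: the set of minimal elements (`y ≤ x` implies `x ≤ y`). -/
noncomputable def minSet (T : FinPre α) : Finset α :=
  T.carrier.filter (fun x => ∀ y, T.le y x → T.le x y)

/-- Connectivity of a subset `S`, for the graph with edges between comparable pairs. -/
def ConnOn (T : FinPre α) (S : Set α) : Prop :=
  ∀ x ∈ S, ∀ y ∈ S,
    Relation.ReflTransGen (fun a b => a ∈ S ∧ b ∈ S ∧ (T.le a b ∨ T.le b a)) x y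

/-- A finite preorder is connected if it is nonempty and any two elements are linked by
a chain of comparable pairs. -/
def Connected (T : FinPre α) : Prop :=
  T.carrier.Nonempty ∧ T.ConnOn ↑T.carrier

/-- `I` is a connected component of `S` (for the comparability graph of `T`). -/
def IsCC (T : FinPre α) (S I : Set α) : Prop :=
  I.Nonempty ∧ I ⊆ S ∧ T.ConnOn I ∧
    ∀ x ∈ I, ∀ y ∈ S, (T.le x y ∨ T.le y x) → y ∈ I

/-- `Y_- = {x ∉ Y : ∃ y ∈ Y, x ≤ y}`. -/
noncomputable def below (T : FinPre α) (Y : Finset α) : Finset α :=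
  (T.carrier \ Y).filter (fun x => ∃ y ∈ Y, T.le x y)

/-- `Y ◎ T` : `Y` is an upper (open) set, the image of `Y_-` in the quotient poset `T̄`
is a single bag belonging to `min(T̄)` (i.e. `Y_-` is nonempty, contained in the bag of
some minimal `w`), and `Y` is a connected component of
`{x : y < x for all y ∈ Y_-}`. -/
def Circ (T : FinPre α) (Y : Finset α) : Prop :=
  (∀ x ∈ Y, ∀ z, T.le x z → z ∈ Y) ∧
  ∃ w ∈ T.below Y, w ∈ T.minSet ∧ (∀ x ∈ T.below Y, T.equiv x w) ∧
    T.IsCC {x | x ∈ T.carrier ∧ ∀ y ∈ T.below Y, T.lt y x} ↑Y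

/-- The induced (restricted) preorder on a subset `S`. -/
def restrict (T : FinPre α) (S : Finset α) : FinPre α where
  carrier := T.carrier ∩ S
  le x y := T.le x y ∧ x ∈ S ∧ y ∈ S
  mem_of_le := by
    intro x y h
    rcases T.mem_of_le h.1 with ⟨hx, hy⟩
    exact ⟨Finset.mem_inter.2 ⟨hx, h.2.1⟩, Finset.mem_inter.2 ⟨hy, h.2.2⟩⟩
  le_refl := by
    intro x hx
    rcases Finset.mem_inter.1 hx with ⟨h1, h2⟩
    exact ⟨T.le_refl x h1, h2, h2⟩
  le_trans := by
    rintro x y z ⟨h1, hx, hy⟩ ⟨h2, _, hz⟩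
    exact ⟨T.le_trans h1 h2, hx, hz⟩

/-- The grafting `T' ↘_v T''` of `T'` above the vertex `v` of `T''` (auxiliary version,
with the disjointness hypotheses as arguments). -/
def graftAux (T' T'' : FinPre α) (v : α) (hd : Disjoint T'.carrier T''.carrier)
    (hv : v ∈ T''.carrier) : FinPre α where
  carrier := T'.carrier ∪ T''.carrier
  le x y := T'.le x y ∨ T''.le x y ∨ (T''.le x v ∧ y ∈ T'.carrier)
  mem_of_le := by
    rintro x y (h | h | ⟨h1, h2⟩)
    · rcases T'.mem_of_le h with ⟨hx, hy⟩
      exact ⟨Finset.mem_union_left _ hx, Finset.mem_union_left _ hy⟩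
    · rcases T''.mem_of_le h with ⟨hx, hy⟩
      exact ⟨Finset.mem_union_right _ hx, Finset.mem_union_right _ hy⟩
    · exact ⟨Finset.mem_union_right _ (T''.mem_of_le h1).1, Finset.mem_union_left _ h2⟩
  le_refl := by
    intro x hx
    rcases Finset.mem_union.1 hx with h | h
    · exact Or.inl (T'.le_refl x h)
    · exact Or.inr (Or.inl (T''.le_refl x h))
  le_trans := by
    rintro x y z (h1 | h1 | ⟨h1, h1'⟩) (h2 | h2 | ⟨h2, h2'⟩)
    · exact Or.inl (T'.le_trans h1 h2)
    · exact absurd (T''.mem_of_le h2).1 (Finset.disjoint_left.1 hd (T'.mem_of_le h1).2)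
    · exact absurd (T''.mem_of_le h2).1 (Finset.disjoint_left.1 hd (T'.mem_of_le h1).2)
    · exact absurd (T'.mem_of_le h2).1 (Finset.disjoint_right.1 hd (T''.mem_of_le h1).2)
    · exact Or.inr (Or.inl (T''.le_trans h1 h2))
    · exact Or.inr (Or.inr ⟨T''.le_trans h1 h2, h2'⟩)
    · exact Or.inr (Or.inr ⟨h1, (T'.mem_of_le h2).2⟩)
    · exact absurd (T''.mem_of_le h2).1 (Finset.disjoint_left.1 hd h1')
    · exact absurd (T''.mem_of_le h2).1 (Finset.disjoint_left.1 hd h1')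

/-- The grafting `T' ↘_v T''` of `T'` above the vertex `v` of `T''`: the preorder on
`X₁ ⊔ X₂` restricting to `T'` on `X₁` and to `T''` on `X₂`, with `q ≤ p` for `q ∈ X₂`,
`p ∈ X₁` iff `q ≤_{T''} v`.  (Junk value when the carriers are not disjoint or
`v ∉ T''`.) -/
noncomputable def graft (T' T'' : FinPre α) (v : α) : FinPre α :=
  if h : Disjoint T'.carrier T''.carrier ∧ v ∈ T''.carrier then
    T'.graftAux T'' v h.1 h.2 else T'

/-- The set of subsets `Y` of the carrier with `Y ◎ T`. -/
noncomputable def circSet (T : FinPre α) : Finset (Finset α) :=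
  T.carrier.powerset.filter (fun Y => T.Circ Y)

/-- Isomorphisms from `A` to `B` (bijections order-preserving in both directions),
encoded as maps `α → α` that are the identity outside of the carrier of `A`. -/
def Isos (A B : FinPre α) : Set (α → α) :=
  {f | Set.BijOn f ↑A.carrier ↑B.carrier ∧
    (∀ x ∈ A.carrier, ∀ y ∈ A.carrier, (A.le x y ↔ B.le (f x) (f y))) ∧
    ∀ x, x ∉ A.carrier → f x = x}

/-- `⟨A, B⟩`: the number of isomorphisms from `A` to `B`. -/
noncomputable def pairing (A B : FinPre α) : ℕ := Nat.card ↥(Isos A B)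

/-- The NAP coproduct `δ(T) = (1/|min(T)|) Σ_{Y ◎ T} T|_Y ⊗ T|_{X \ Y}`, with values
in the rational vector space spanned by pairs of finite preorders. -/
noncomputable def delta (T : FinPre α) : (FinPre α × FinPre α) →₀ ℚ :=
  ((T.minSet.card : ℚ))⁻¹ • ∑ Y ∈ T.circSet,
    Finsupp.single (T.restrict Y, T.restrict (T.carrier \ Y)) (1 : ℚ)

/-! ### Auxiliary lemmas -/

lemma ext' {A B : FinPre α} (h1 : A.carrier = B.carrier)
    (h2 : ∀ x y, A.le x y ↔ B.le x y) : A = B := by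
  obtain ⟨c, l, m, r, t⟩ := A
  obtain ⟨c', l', m', r', t'⟩ := B
  dsimp at h1 h2
  subst h1
  have hle : l = l' := funext fun x => funext fun y => propext (h2 x y)
  subst hle
  rfl

lemma restrict_restrict (T : FinPre α) {S S' : Finset α} (h : S' ⊆ S) :
    (T.restrict S).restrict S' = T.restrict S' := by
  apply ext'
  · show T.carrier ∩ S ∩ S' = T.carrier ∩ S'
    rw [Finset.inter_assoc, Finset.inter_eq_right.2 h]
  · intro x y
    show (T.le x y ∧ x ∈ S ∧ y ∈ S) ∧ x ∈ S' ∧ y ∈ S' ↔ T.le x y ∧ x ∈ S' ∧ y ∈ S'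
    constructor
    · rintro ⟨⟨h1, -, -⟩, h2, h3⟩; exact ⟨h1, h2, h3⟩
    · rintro ⟨h1, h2, h3⟩; exact ⟨⟨h1, h h2, h h3⟩, h2, h3⟩

lemma restrict_sdiff_carrier (T : FinPre α) (Y : Finset α) :
    (T.restrict (T.carrier \ Y)).carrier = T.carrier \ Y :=
  Finset.inter_eq_right.2 Finset.sdiff_subset

section CircLemmas

variable {T : FinPre α} {Y : Finset α}

lemma circ_subset (hY : Y ∈ T.circSet) : Y ⊆ T.carrier :=
  Finset.mem_powerset.1 (Finset.mem_filter.1 hY).1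

lemma circ_upper (hY : Y ∈ T.circSet) : ∀ x ∈ Y, ∀ z, T.le x z → z ∈ Y :=
  ((Finset.mem_filter.1 hY).2).1

lemma circ_witness (hY : Y ∈ T.circSet) :
    ∃ w ∈ T.below Y, w ∈ T.minSet ∧ (∀ x ∈ T.below Y, T.equiv x w) ∧
      T.IsCC {x | x ∈ T.carrier ∧ ∀ y ∈ T.below Y, T.lt y x} ↑Y :=
  ((Finset.mem_filter.1 hY).2).2

lemma circ_not_min (hY : Y ∈ T.circSet) {x : α} (hx : x ∈ Y) : x ∉ T.minSet := by
  obtain ⟨w, hwb, hwm, heq, hcc⟩ := circ_witness hY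
  have hxS := hcc.2.1 (Finset.mem_coe.2 hx)
  obtain ⟨-, hlt⟩ := hxS
  have h := hlt w hwb
  intro hmin
  exact h.2 ((Finset.mem_filter.1 hmin).2 w h.1)

lemma equiv_min {x w : α} (hw : w ∈ T.minSet) (h : T.equiv x w) (hx : x ∈ T.carrier) :
    x ∈ T.minSet := by
  rw [minSet, Finset.mem_filter] at hw ⊢
  exact ⟨hx, fun u hu => T.le_trans h.1 (hw.2 u (T.le_trans hu h.1))⟩

lemma below_min (hY : Y ∈ T.circSet) {x : α} (hx : x ∈ T.below Y) : x ∈ T.minSet := by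
  obtain ⟨w, hwb, hwm, heq, -⟩ := circ_witness hY
  have hxc : x ∈ T.carrier := (Finset.mem_sdiff.1 (Finset.mem_filter.1 hx).1).1
  exact equiv_min hwm (heq x hx) hxc

lemma minSet_restrict (hY : Y ∈ T.circSet) :
    (T.restrict (T.carrier \ Y)).minSet = T.minSet := by
  ext x
  constructor
  · intro hx
    rw [minSet, Finset.mem_filter] at hx ⊢
    obtain ⟨hx1, hx2⟩ := hx
    rw [restrict_sdiff_carrier] at hx1
    obtain ⟨hxX, hxY⟩ := Finset.mem_sdiff.1 hx1
    refine ⟨hxX, fun y hyx => ?_⟩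
    have hyX : y ∈ T.carrier := (T.mem_of_le hyx).1
    have hyY : y ∉ Y := fun hyY => hxY (circ_upper hY y hyY x hyx)
    exact (hx2 y ⟨hyx, Finset.mem_sdiff.2 ⟨hyX, hyY⟩, Finset.mem_sdiff.2 ⟨hxX, hxY⟩⟩).1
  · intro hx
    rw [minSet, Finset.mem_filter] at hx ⊢
    obtain ⟨hxX, hx2⟩ := hx
    have hxY : x ∉ Y := fun hxY =>
      circ_not_min hY hxY (Finset.mem_filter.2 ⟨hxX, hx2⟩)
    refine ⟨by rw [restrict_sdiff_carrier]; exact Finset.mem_sdiff.2 ⟨hxX, hxY⟩, ?_⟩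
    rintro y ⟨hyx, hy1, hx1⟩
    exact ⟨hx2 y hyx, hx1, hy1⟩

lemma restrict_le {S : Finset α} {x y : α} :
    (T.restrict S).le x y ↔ T.le x y ∧ x ∈ S ∧ y ∈ S := Iff.rfl

lemma restrict_lt_iff {S : Finset α} {x y : α} (hx : x ∈ S) (hy : y ∈ S) :
    (T.restrict S).lt x y ↔ T.lt x y := by
  unfold lt
  constructor
  · rintro ⟨⟨h1, -, -⟩, h2⟩
    exact ⟨h1, fun h => h2 ⟨h, hy, hx⟩⟩
  · rintro ⟨h1, h2⟩
    exact ⟨⟨h1, hx, hy⟩, fun h => h2 h.1⟩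

lemma swap_circ {Z : Finset α} (hY : Y ∈ T.circSet)
    (hZ : Z ∈ (T.restrict (T.carrier \ Y)).circSet) :
    Z ∈ T.circSet ∧ Y ∈ (T.restrict (T.carrier \ Z)).circSet := by
  have hYsub := circ_subset hY
  have hZsub : Z ⊆ T.carrier \ Y := by
    have := circ_subset hZ; rwa [restrict_sdiff_carrier] at this
  have hZnm : ∀ x ∈ Z, x ∉ T.minSet := by
    intro x hx hmin
    exact circ_not_min hZ hx (by rwa [minSet_restrict hY])
  -- `Z` is an upper set of `T`
  have hZupT : ∀ x ∈ Z, ∀ z, T.le x z → z ∈ Z := by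
    intro x hx z hxz
    have hzX : z ∈ T.carrier := (T.mem_of_le hxz).2
    have hxXY := hZsub hx
    have hzY : z ∉ Y := by
      intro hzY
      exact hZnm x hx (below_min hY (Finset.mem_filter.2 ⟨hxXY, ⟨z, hzY, hxz⟩⟩))
    exact circ_upper hZ x hx z (restrict_le.2 ⟨hxz, hxXY, Finset.mem_sdiff.2 ⟨hzX, hzY⟩⟩)
  -- the below-set of `Z` is the same in `T` and in the restriction
  have hbelow : (T.restrict (T.carrier \ Y)).below Z = T.below Z := by
    ext x
    simp only [below, restrict_sdiff_carrier, Finset.mem_filter, Finset.mem_sdiff,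
      restrict_le]
    constructor
    · rintro ⟨⟨⟨hxX, hxY⟩, hxZ⟩, z, hz, hxz, -, -⟩
      exact ⟨⟨hxX, hxZ⟩, z, hz, hxz⟩
    · rintro ⟨⟨hxX, hxZ⟩, z, hz, hxz⟩
      have hxY : x ∉ Y := fun hxY =>
        (Finset.mem_sdiff.1 (hZsub hz)).2 (circ_upper hY x hxY z hxz)
      exact ⟨⟨⟨hxX, hxY⟩, hxZ⟩, z, hz, hxz, ⟨hxX, hxY⟩,
        Finset.mem_sdiff.1 (hZsub hz)⟩
  have hbelowXY : ∀ x ∈ T.below Z, x ∈ T.carrier \ Y := by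
    intro x hx
    rw [← hbelow] at hx
    have h1 := (Finset.mem_sdiff.1 (Finset.mem_filter.1 hx).1).1
    rwa [restrict_sdiff_carrier] at h1
  obtain ⟨w, hwb, hwm, heqv, hcc⟩ := circ_witness hZ
  have hwbT : w ∈ T.below Z := by rwa [hbelow] at hwb
  -- Part 1 : `Z ◎ T`
  have hZT : Z ∈ T.circSet := by
    rw [circSet, Finset.mem_filter, Finset.mem_powerset]
    refine ⟨fun x hx => (Finset.mem_sdiff.1 (hZsub hx)).1,
      hZupT, w, hwbT, by rwa [minSet_restrict hY] at hwm, ?_, ?_, ?_, ?_, ?_⟩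
    · intro x hx
      rw [← hbelow] at hx
      have h := heqv x hx
      exact ⟨h.1.1, h.2.1⟩
    · exact hcc.1
    · intro x hx
      have hxZ : x ∈ Z := hx
      have hxmem := hZsub hxZ
      refine ⟨(Finset.mem_sdiff.1 hxmem).1, fun y hy => ?_⟩
      have hyR : y ∈ (T.restrict (T.carrier \ Y)).below Z := by rwa [hbelow]
      have hlt := (hcc.2.1 (Finset.mem_coe.2 hxZ)).2 y hyR
      exact (restrict_lt_iff (hbelowXY y hy) hxmem).1 hlt
    · intro a ha b hb
      refine Relation.ReflTransGen.mono ?_ _ _ (hcc.2.2.1 a ha b hb)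
      rintro u v ⟨hu, hv, h | h⟩
      exacts [⟨hu, hv, Or.inl h.1⟩, ⟨hu, hv, Or.inr h.1⟩]
    · rintro x hx y hy (h | h)
      · exact hZupT x hx y h
      · by_cases hyZ : y ∈ Z
        · exact hyZ
        · exfalso
          have hyb : y ∈ T.below Z :=
            Finset.mem_filter.2 ⟨Finset.mem_sdiff.2 ⟨hy.1, hyZ⟩, x, hx, h⟩
          exact (hy.2 y hyb).2 (T.le_refl y hy.1)
  -- Part 2 : `Y ◎ T|_{X \ Z}`
  have hQc := restrict_sdiff_carrier T Z
  have hYZ : ∀ y ∈ Y, y ∉ Z := fun y hy hz => (Finset.mem_sdiff.1 (hZsub hz)).2 hy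
  have hbelowYZ : ∀ x ∈ T.below Y, x ∉ Z := fun x hx hz => hZnm x hz (below_min hY hx)
  have hYXZ : ∀ y ∈ Y, y ∈ T.carrier \ Z := fun y hy =>
    Finset.mem_sdiff.2 ⟨hYsub hy, hYZ y hy⟩
  have hbelowXZ : ∀ x ∈ T.below Y, x ∈ T.carrier \ Z := fun x hx =>
    Finset.mem_sdiff.2
      ⟨(Finset.mem_sdiff.1 (Finset.mem_filter.1 hx).1).1, hbelowYZ x hx⟩
  have hQbelow : (T.restrict (T.carrier \ Z)).below Y = T.below Y := by
    ext x
    simp only [below, hQc, Finset.mem_filter, Finset.mem_sdiff, restrict_le]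
    constructor
    · rintro ⟨⟨⟨hxX, hxZ⟩, hxY⟩, u, hu, hxu, -, -⟩
      exact ⟨⟨hxX, hxY⟩, u, hu, hxu⟩
    · rintro ⟨⟨hxX, hxY⟩, u, hu, hxu⟩
      have hxb : x ∈ T.below Y :=
        Finset.mem_filter.2 ⟨Finset.mem_sdiff.2 ⟨hxX, hxY⟩, u, hu, hxu⟩
      exact ⟨⟨⟨hxX, hbelowYZ x hxb⟩, hxY⟩, u, hu, hxu,
        ⟨hxX, hbelowYZ x hxb⟩, Finset.mem_sdiff.1 (hYXZ u hu)⟩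
  obtain ⟨v, hvb, hvm, hveq, hvcc⟩ := circ_witness hY
  refine ⟨hZT, ?_⟩
  rw [circSet, Finset.mem_filter, Finset.mem_powerset, hQc]
  refine ⟨fun y hy => hYXZ y hy,
    fun x hx z hxz => circ_upper hY x hx z (restrict_le.1 hxz).1,
    v, by rwa [hQbelow], by rwa [minSet_restrict hZT], ?_, ?_, ?_, ?_, ?_⟩
  · intro x hx
    rw [hQbelow] at hx
    have h := hveq x hx
    exact ⟨restrict_le.2 ⟨h.1, hbelowXZ x hx, hbelowXZ v hvb⟩,
      restrict_le.2 ⟨h.2, hbelowXZ v hvb, hbelowXZ x hx⟩⟩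
  · exact hvcc.1
  · intro x hx
    have hxY : x ∈ Y := hx
    have hS := hvcc.2.1 hx
    refine ⟨by rw [hQc]; exact hYXZ x hxY, fun y hy => ?_⟩
    rw [hQbelow] at hy
    exact (restrict_lt_iff (hbelowXZ y hy) (hYXZ x hxY)).2 (hS.2 y hy)
  · intro a ha b hb
    refine Relation.ReflTransGen.mono ?_ _ _ (hvcc.2.2.1 a ha b hb)
    rintro u u' ⟨hu, hu', h | h⟩
    · exact ⟨hu, hu', Or.inl (restrict_le.2 ⟨h, hYXZ u hu, hYXZ u' hu'⟩)⟩
    · exact ⟨hu, hu', Or.inr (restrict_le.2 ⟨h, hYXZ u' hu', hYXZ u hu⟩)⟩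
  · intro x hx y hyS hcomp
    have hySXZ : y ∈ T.carrier \ Z := by have := hyS.1; rwa [hQc] at this
    have hyST : y ∈ {x | x ∈ T.carrier ∧ ∀ y' ∈ T.below Y, T.lt y' x} := by
      refine ⟨(Finset.mem_sdiff.1 hySXZ).1, fun b hb => ?_⟩
      have hb' : b ∈ (T.restrict (T.carrier \ Z)).below Y := by rwa [hQbelow]
      exact (restrict_lt_iff (hbelowXZ b hb) hySXZ).1 (hyS.2 b hb')
    exact hvcc.2.2.2 x hx y hyST
      (hcomp.imp (fun h => (restrict_le.1 h).1) (fun h => (restrict_le.1 h).1))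

end CircLemmas

end FinPre

/-- The coproduct `δ` on finite connected preorders satisfies the left
NAP identity `(id ⊗ δ) ∘ δ = τ¹² ∘ (id ⊗ δ) ∘ δ`: the element
`(1/|min(T)|) Σ_{Y ◎ T} (1/|min(T|_{X\Y})|) Σ_{Z ◎ T|_{X\Y}}
T|_Y ⊗ T|_Z ⊗ T|_{X\(Y∪Z)}` is invariant under exchanging the first two tensor
factors. -/
theorem coproduct_nap_preorder {α : Type*} [DecidableEq α] (T : FinPre α)
    (hT : T.Connected) :
    (((T.minSet.card : ℚ))⁻¹ • ∑ Y ∈ T.circSet,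
      (((T.restrict (T.carrier \ Y)).minSet.card : ℚ))⁻¹ •
        ∑ Z ∈ (T.restrict (T.carrier \ Y)).circSet,
          Finsupp.single
            (T.restrict Y, (T.restrict (T.carrier \ Y)).restrict Z,
              (T.restrict (T.carrier \ Y)).restrict ((T.carrier \ Y) \ Z))
            (1 : ℚ) :
        (FinPre α × FinPre α × FinPre α) →₀ ℚ)
    = ((T.minSet.card : ℚ))⁻¹ • ∑ Y ∈ T.circSet,
      (((T.restrict (T.carrier \ Y)).minSet.card : ℚ))⁻¹ •
        ∑ Z ∈ (T.restrict (T.carrier \ Y)).circSet,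
          Finsupp.single
            ((T.restrict (T.carrier \ Y)).restrict Z, T.restrict Y,
              (T.restrict (T.carrier \ Y)).restrict ((T.carrier \ Y) \ Z))
            (1 : ℚ) := by
  classical
  have hL : (∑ Y ∈ T.circSet,
      (((T.restrict (T.carrier \ Y)).minSet.card : ℚ))⁻¹ •
        ∑ Z ∈ (T.restrict (T.carrier \ Y)).circSet,
          Finsupp.single
            (T.restrict Y, (T.restrict (T.carrier \ Y)).restrict Z,
              (T.restrict (T.carrier \ Y)).restrict ((T.carrier \ Y) \ Z))
            (1 : ℚ) :
        (FinPre α × FinPre α × FinPre α) →₀ ℚ)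
      = ((T.minSet.card : ℚ))⁻¹ • ∑ Y ∈ T.circSet,
          ∑ Z ∈ (T.restrict (T.carrier \ Y)).circSet,
            Finsupp.single
              (T.restrict Y, T.restrict Z, T.restrict ((T.carrier \ Y) \ Z))
              (1 : ℚ) := by
    rw [Finset.smul_sum]
    refine Finset.sum_congr rfl fun Y hY => ?_
    rw [FinPre.minSet_restrict hY]
    congr 1
    refine Finset.sum_congr rfl fun Z hZ => ?_
    have hZsub : Z ⊆ T.carrier \ Y := by
      have := FinPre.circ_subset hZ
      rwa [FinPre.restrict_sdiff_carrier] at this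
    rw [FinPre.restrict_restrict T hZsub,
      FinPre.restrict_restrict T (Finset.sdiff_subset (s := T.carrier \ Y) (t := Z))]
  have hR : (∑ Y ∈ T.circSet,
      (((T.restrict (T.carrier \ Y)).minSet.card : ℚ))⁻¹ •
        ∑ Z ∈ (T.restrict (T.carrier \ Y)).circSet,
          Finsupp.single
            ((T.restrict (T.carrier \ Y)).restrict Z, T.restrict Y,
              (T.restrict (T.carrier \ Y)).restrict ((T.carrier \ Y) \ Z))
            (1 : ℚ) :
        (FinPre α × FinPre α × FinPre α) →₀ ℚ)
      = ((T.minSet.card : ℚ))⁻¹ • ∑ Y ∈ T.circSet,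
          ∑ Z ∈ (T.restrict (T.carrier \ Y)).circSet,
            Finsupp.single
              (T.restrict Z, T.restrict Y, T.restrict ((T.carrier \ Y) \ Z))
              (1 : ℚ) := by
    rw [Finset.smul_sum]
    refine Finset.sum_congr rfl fun Y hY => ?_
    rw [FinPre.minSet_restrict hY]
    congr 1
    refine Finset.sum_congr rfl fun Z hZ => ?_
    have hZsub : Z ⊆ T.carrier \ Y := by
      have := FinPre.circ_subset hZ
      rwa [FinPre.restrict_sdiff_carrier] at this
    rw [FinPre.restrict_restrict T hZsub,
      FinPre.restrict_restrict T (Finset.sdiff_subset (s := T.carrier \ Y) (t := Z))]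
  rw [hL, hR]
  congr 1
  congr 1
  rw [Finset.sum_sigma', Finset.sum_sigma']
  refine Finset.sum_nbij' (fun p => ⟨p.2, p.1⟩) (fun p => ⟨p.2, p.1⟩)
    ?_ ?_ ?_ ?_ ?_
  · intro p hp
    rw [Finset.mem_sigma] at hp ⊢
    exact (FinPre.swap_circ hp.1 hp.2).symm.imp (fun h => h) (fun h => h) |>.symm
      |> fun h => ⟨h.1, h.2⟩
  · intro p hp
    rw [Finset.mem_sigma] at hp ⊢
    exact ⟨(FinPre.swap_circ hp.1 hp.2).1, (FinPre.swap_circ hp.1 hp.2).2⟩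
  · intro p _; rfl
  · intro p _; rfl
  · intro p hp
    rw [Finset.mem_sigma] at hp
    have hZsub : p.2 ⊆ T.carrier \ p.1 := by
      have := FinPre.circ_subset hp.2
      rwa [FinPre.restrict_sdiff_carrier] at this
    have hsd : (T.carrier \ p.1) \ p.2 = (T.carrier \ p.2) \ p.1 := sdiff_sdiff_comm
    rw [hsd]
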